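/- For complex numbers a1,b1,a2,b2 and nonnegative integers p1,p2,k: S_{a1,b1}^{a2,b2,p2}(p1,k) = Σ_{j1=0}^{p1} Σ_{j2=0}^{p2} C(p1,j1) C(p2,j2) a1^{j1} a2^{j2} b1^{p1−j1} b2^{p2−j2} S(j1+j2, k), where S(·,·) are the standard Stirling numbers of the second kind. -/

import Mathlib

open Finset

/-- Stirling numbers of the second kind. -/
def stirling2 : ℕ → ℕ → ℕ
  | 0, 0 => 1
  | 0, _ + 1 => 0
  | _ + 1, 0 => 0
  | p + 1, k + 1 => stirling2 p k + (k + 1) * stirling2 p (k + 1)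

/-- Unsigned Stirling numbers of the first kind. -/
def stirling1 : ℕ → ℕ → ℕ
  | 0, 0 => 1
  | 0, _ + 1 => 0
  | _ + 1, 0 => 0
  | p + 1, k + 1 => stirling1 p k + p * stirling1 p (k + 1)

/-- Stirling numbers of the second kind with integer second argument (0 when negative). -/
def stirling2Z (p : ℕ) (k : ℤ) : ℤ :=
  if k < 0 then 0 else stirling2 p k.toNat

/-- Generalized Stirling number of the second kind
`S_{a1,b1}^{a2,b2,p2}(p1,k)`. -/
noncomputable def gsn (a1 b1 a2 b2 : ℂ) (p1 p2 k : ℕ) : ℂ :=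
  (1 / (k.factorial : ℂ)) * ∑ j ∈ range (k + 1),
    (-1) ^ j * (k.choose j : ℂ) * (a1 * ((k : ℂ) - j) + b1) ^ p1 *
      (a2 * ((k : ℂ) - j) + b2) ^ p2

/-- Generalized Stirling number with integer index (0 when negative). -/
noncomputable def gsnZ (a1 b1 a2 b2 : ℂ) (p1 p2 : ℕ) (k : ℤ) : ℂ :=
  if k < 0 then 0 else gsn a1 b1 a2 b2 p1 p2 k.toNat

-- Pascal split lemma
lemma sumB (n k : ℕ) :
    ∑ j ∈ range (k+2), (-1:ℂ)^j * ((k+1).choose j : ℂ) * ((k:ℂ)+1-j)^n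
      = (∑ j ∈ range (k+1), (-1:ℂ)^j * (k.choose j : ℂ) * ((k:ℂ)+1-j)^n)
        - ∑ j ∈ range (k+1), (-1:ℂ)^j * (k.choose j : ℂ) * ((k:ℂ)-j)^n := by
  rw [Finset.sum_range_succ' (fun j => (-1:ℂ)^j * ((k+1).choose j : ℂ) * ((k:ℂ)+1-(j:ℕ))^n) (k+1)]
  have h1 : ∀ j ∈ range (k+1),
      (-1:ℂ)^(j+1) * ((k+1).choose (j+1) : ℂ) * ((k:ℂ)+1-((j+1:ℕ):ℂ))^n
        = (-1:ℂ)^(j+1) * (k.choose (j+1) : ℂ) * ((k:ℂ)+1-((j+1:ℕ):ℂ))^n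
          - (-1:ℂ)^j * (k.choose j : ℂ) * ((k:ℂ)-j)^n := by
    intro j hj
    rw [Nat.choose_succ_succ]
    push_cast
    have : (k:ℂ)+1-((j:ℂ)+1) = (k:ℂ)-j := by ring
    rw [this]
    ring
  rw [Finset.sum_congr rfl h1, Finset.sum_sub_distrib]
  have h2 : ∑ j ∈ range (k+1), (-1:ℂ)^(j+1) * (k.choose (j+1) : ℂ) * ((k:ℂ)+1-((j+1:ℕ):ℂ))^n
      = (∑ j ∈ range (k+1), (-1:ℂ)^j * (k.choose j : ℂ) * ((k:ℂ)+1-j)^n) - ((k:ℂ)+1)^n := by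
    have e := Finset.sum_range_succ' (fun j => (-1:ℂ)^j * (k.choose j : ℂ) * ((k:ℂ)+1-(j:ℕ))^n) (k+1)
    have e2 : ∑ j ∈ range (k+2), (-1:ℂ)^j * (k.choose j : ℂ) * ((k:ℂ)+1-(j:ℕ))^n
        = ∑ j ∈ range (k+1), (-1:ℂ)^j * (k.choose j : ℂ) * ((k:ℂ)+1-(j:ℕ))^n := by
      rw [Finset.sum_range_succ]
      simp [Nat.choose_succ_self]
    simp only [Nat.cast_zero, pow_zero, one_mul, Nat.choose_zero_right, Nat.cast_one, sub_zero] at e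
    rw [e2] at e
    linear_combination -e
  rw [h2]
  simp
  ring

lemma key (n : ℕ) : ∀ k : ℕ,
    ∑ j ∈ range (k+1), (-1:ℂ)^j * (k.choose j : ℂ) * ((k:ℂ) - j)^n
      = (k.factorial : ℂ) * (stirling2 n k : ℂ) := by
  induction n with
  | zero =>
    intro k
    have h := Int.alternating_sum_range_choose (n := k)
    have h' : ∑ j ∈ range (k+1), (-1:ℂ)^j * (k.choose j : ℂ) = if k = 0 then 1 else 0 := by
      have := congrArg (fun z : ℤ => (z : ℂ)) h
      push_cast at this
      simpa using this
    cases k with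
    | zero => simp [stirling2]
    | succ k =>
      simp only [pow_zero, mul_one]
      rw [h']
      simp [stirling2]
  | succ n ih =>
    intro k
    cases k with
    | zero => simp [stirling2]
    | succ k =>
      have hterm : ∀ j ∈ range (k+2),
          (-1:ℂ)^j * ((k+1).choose j : ℂ) * ((k:ℂ)+1-j)^(n+1)
            = ((k:ℂ)+1) * ((-1:ℂ)^j * (k.choose j : ℂ) * ((k:ℂ)+1-j)^n) := by
        intro j hj
        have hj' : j ≤ k+1 := by
          have := mem_range.mp hj; omega
        have hc := Nat.choose_mul_succ_eq k j
        have hcast : ((k+1-j : ℕ) : ℂ) = (k:ℂ)+1-j := by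
          rw [Nat.cast_sub hj']; push_cast; ring
        have hkey : ((k+1).choose j : ℂ) * ((k:ℂ)+1-j) = (k.choose j : ℂ) * ((k:ℂ)+1) := by
          rw [← hcast]
          exact_mod_cast congrArg (fun m : ℕ => (m : ℂ)) hc.symm
        linear_combination ((-1:ℂ)^j * ((k:ℂ)+1-j)^n) * hkey
      have hA : ∑ j ∈ range (k+2), (-1:ℂ)^j * ((k+1).choose j : ℂ) * ((k:ℂ)+1-j)^(n+1)
          = ((k:ℂ)+1) * ∑ j ∈ range (k+1), (-1:ℂ)^j * (k.choose j : ℂ) * ((k:ℂ)+1-j)^n := by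
        rw [Finset.sum_congr rfl hterm, ← Finset.mul_sum, Finset.sum_range_succ]
        simp
      have i1 := ih k
      have i2 := ih (k+1)
      have hH := sumB n k
      push_cast [Nat.factorial_succ] at i2 ⊢
      simp only [stirling2]
      push_cast
      rw [hA]
      linear_combination (-((k:ℂ)+1))*hH + ((k:ℂ)+1)*i1 + ((k:ℂ)+1)*i2
theorem stmt5 (a1 b1 a2 b2 : ℂ) (p1 p2 k : ℕ) :
    gsn a1 b1 a2 b2 p1 p2 k =
      ∑ j1 ∈ range (p1 + 1), ∑ j2 ∈ range (p2 + 1),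
        (p1.choose j1 : ℂ) * (p2.choose j2 : ℂ) * a1 ^ j1 * a2 ^ j2 *
          b1 ^ (p1 - j1) * b2 ^ (p2 - j2) * (stirling2 (j1 + j2) k : ℂ) := by
  have hk : (k.factorial : ℂ) ≠ 0 := Nat.cast_ne_zero.mpr (Nat.factorial_ne_zero k)
  have expand : ∀ j ∈ range (k+1),
      (-1:ℂ)^j * (k.choose j : ℂ) * (a1 * ((k:ℂ)-j) + b1)^p1 * (a2*((k:ℂ)-j)+b2)^p2
        = ∑ j1 ∈ range (p1+1), ∑ j2 ∈ range (p2+1),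
            (p1.choose j1 : ℂ)*(p2.choose j2 : ℂ)*a1^j1*a2^j2*b1^(p1-j1)*b2^(p2-j2) *
              ((-1:ℂ)^j * (k.choose j : ℂ) * ((k:ℂ)-j)^(j1+j2)) := by
    intro j hj
    rw [add_pow, add_pow, mul_assoc, Finset.sum_mul_sum, Finset.mul_sum]
    refine Finset.sum_congr rfl fun j1 _ => ?_
    rw [Finset.mul_sum]
    refine Finset.sum_congr rfl fun j2 _ => ?_
    rw [mul_pow, mul_pow, pow_add]
    ring
  unfold gsn
  rw [Finset.sum_congr rfl expand, Finset.sum_comm, Finset.mul_sum]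
  refine Finset.sum_congr rfl fun j1 _ => ?_
  rw [Finset.sum_comm, Finset.mul_sum]
  refine Finset.sum_congr rfl fun j2 _ => ?_
  rw [← Finset.mul_sum, key (j1+j2) k]
  field_simp
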